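/- For each i in Z/3, every i-balanced word in the free monoid on A is ~-equivalent to a concatenation of words from the seven-element set B_i = {a_i, b_i, c_i, d_i, x_i, b_{i-1} b_i d_{i-1}, b_{i-1} d_i d_{i-1}} (each of which is i-balanced). -/

import Mathlib

/-- The 15-letter alphabet A = {a_i, b_i, c_i, d_i, x_i : i ∈ ℤ/3}. -/
inductive Letter : Type
  | a : ZMod 3 → Letter
  | b : ZMod 3 → Letter
  | c : ZMod 3 → Letter
  | d : ZMod 3 → Letter
  | x : ZMod 3 → Letter
  deriving DecidableEq

/-- Words: the free monoid on the alphabet A. -/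
abbrev Word := FreeMonoid Letter

def a (i : ZMod 3) : Word := FreeMonoid.of (Letter.a i)
def b (i : ZMod 3) : Word := FreeMonoid.of (Letter.b i)
def c (i : ZMod 3) : Word := FreeMonoid.of (Letter.c i)
def d (i : ZMod 3) : Word := FreeMonoid.of (Letter.d i)
def x (i : ZMod 3) : Word := FreeMonoid.of (Letter.x i)

/-- t_i = b_{i+1} d_{i-1} d_{i+1} b_{i-1}. -/
def t (i : ZMod 3) : Word := b (i+1) * d (i-1) * d (i+1) * b (i-1)

/-- t'_i = d_{i-1} b_{i+1} b_{i-1} d_{i+1}. -/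
def t' (i : ZMod 3) : Word := d (i-1) * b (i+1) * b (i-1) * d (i+1)

/-- The defining relations (1)-(10) of the semigroup SK. -/
inductive SKRel : Word → Word → Prop
  | r1a (i : ZMod 3) : SKRel (a i) (a (i+1) * d (i-1))
  | r1b (i : ZMod 3) : SKRel (b i) (a (i-1) * c (i+1))
  | r1c (i : ZMod 3) : SKRel (c i) (b (i-1) * c (i+1))
  | r1d (i : ZMod 3) : SKRel (d i) (a (i+1) * c (i-1))
  | r2 (i : ZMod 3) : SKRel (x i) (d (i+1) * x (i-1) * b (i+1))
  | r3 : SKRel (d 0 * d 1 * d 2) 1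
  | r4bd (i : ZMod 3) : SKRel (b i * d i) 1
  | r4db (i : ZMod 3) : SKRel (d i * b i) 1
  | r5d (i : ZMod 3) : SKRel (d i * x i * d i) (a i * (d i * x i * d i) * c i)
  | r5b (i : ZMod 3) : SKRel (b i * x i * b i) (a i * (b i * x i * b i) * c i)
  | r6 (i : ZMod 3) :
      SKRel (x i * (d (i+1) * d i * d (i-1))) ((d (i+1) * d i * d (i-1)) * x i)
  | r7 (i : ZMod 3) (w : Word)
      (hw : w ∈ ({c (i+1), x (i+1), b i * d (i+1) * d i} : Set Word)) :
      SKRel ((d i * c i) * w) (w * (d i * c i))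
  | r8 (i : ZMod 3) (w : Word)
      (hw : w ∈ ({a (i+1), b (i+1), c (i+1), x (i+1), b i * d (i+1) * d i} : Set Word)) :
      SKRel ((a i * b i) * w) (w * (a i * b i))
  | r9 (i : ZMod 3) (w : Word)
      (hw : w ∈ ({a i, b i, c i, x i, b (i-1) * d i * d (i-1)} : Set Word)) :
      SKRel (t i * w) (w * t i)
  | r10 (i : ZMod 3) (w : Word)
      (hw : w ∈ ({a (i+1), b (i+1), c (i+1), x (i+1), b i * d (i+1) * d i} : Set Word)) :
      SKRel ((d i * x i * b i) * w) (w * (d i * x i * b i))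

/-- The congruence generated by relations (1)-(10); `skCon u v` means u ~ v,
i.e. u and v have equal images in the presented monoid SK. -/
def skCon : Con Word := conGen SKRel

/-- The bracket coding for i-balancedness: a_i,b_i,c_i,d_i,x_i ↦ empty;
a_{i±1}, b_{i-1}, d_{i+1} ↦ '(' (= 1); b_{i+1}, c_{i±1}, d_{i-1} ↦ ')' (= -1);
x_{i±1} ↦ ')(' (= [-1, 1]). -/
def code (i : ZMod 3) : Letter → List ℤ
  | .a j => if j = i then [] else [1]
  | .b j => if j = i then [] else if j = i - 1 then [1] else [-1]
  | .c j => if j = i then [] else [-1]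
  | .d j => if j = i then [] else if j = i + 1 then [1] else [-1]
  | .x j => if j = i then [] else [-1, 1]

/-- The bracket sequence of a word under the i-balancedness coding. -/
def brackets (i : ZMod 3) (w : Word) : List ℤ :=
  ((FreeMonoid.toList w).map (code i)).flatten

/-- A word is i-balanced if its bracket sequence is completely balanced:
every prefix has at least as many '(' as ')', and totals agree. -/
def IBalanced (i : ZMod 3) (w : Word) : Prop :=
  (∀ p : List ℤ, p <+: brackets i w → 0 ≤ p.sum) ∧ (brackets i w).sum = 0

/-- The seven-element set B_i = {a_i, b_i, c_i, d_i, x_i,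
b_{i-1} b_i d_{i-1}, b_{i-1} d_i d_{i-1}}. -/
def Bset (j : ZMod 3) : Set Word :=
  {a j, b j, c j, d j, x j, b (j-1) * b j * d (j-1), b (j-1) * d j * d (j-1)}

namespace SK5

abbrev M := skCon.Quotient

def q : Word →* M := skCon.mk'

lemma sk_of_q {u v : Word} (h : q u = q v) : skCon u v := skCon.eq.mp h

lemma relM {u v : Word} (h : SKRel u v) : q u = q v :=
  skCon.eq.mpr (ConGen.Rel.of u v h)

abbrev qa (j : ZMod 3) : M := q (a j)
abbrev qb (j : ZMod 3) : M := q (b j)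
abbrev qc (j : ZMod 3) : M := q (c j)
abbrev qd (j : ZMod 3) : M := q (d j)
abbrev qx (j : ZMod 3) : M := q (x j)

/- index arithmetic in ZMod 3 -/
lemma z1 : ∀ i : ZMod 3, i + 1 + 1 = i - 1 := by decide
lemma z2 : ∀ i : ZMod 3, i + 1 - 1 = i := by decide
lemma z3 : ∀ i : ZMod 3, i - 1 + 1 = i := by decide
lemma z4 : ∀ i : ZMod 3, i - 1 - 1 = i + 1 := by decide
lemma z5 : ∀ i : ZMod 3, i + 1 + 2 = i := by decide
lemma z6 : ∀ i : ZMod 3, i - 1 + 2 = i + 1 := by decide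
lemma z7 : ∀ i : ZMod 3, i + 2 = i - 1 := by decide
lemma za : ∀ i : ZMod 3, i + 1 + 1 = i + 2 := by decide
lemma n1 : ∀ i : ZMod 3, i + 1 ≠ i := by decide
lemma n2 : ∀ i : ZMod 3, i - 1 ≠ i := by decide
lemma n3 : ∀ i : ZMod 3, i + 1 ≠ i - 1 := by decide
lemma n4 : ∀ i : ZMod 3, i - 1 ≠ i + 1 := by decide
lemma zcases : ∀ i : ZMod 3, i = 0 ∨ i = 1 ∨ i = 2 := by decide

/- basic unit identities -/
lemma bd1 (j : ZMod 3) : qb j * qd j = 1 := by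
  simpa only [map_mul, map_one] using relM (SKRel.r4bd j)

lemma db1 (j : ZMod 3) : qd j * qb j = 1 := by
  simpa only [map_mul, map_one] using relM (SKRel.r4db j)

lemma bdz (j : ZMod 3) (z : M) : qb j * (qd j * z) = z := by
  rw [← mul_assoc, bd1, one_mul]

lemma dbz (j : ZMod 3) (z : M) : qd j * (qb j * z) = z := by
  rw [← mul_assoc, db1, one_mul]

lemma rot (j : ZMod 3) (h : qd j * (qd (j+1) * qd (j+2)) = 1) :
    qd (j+1) * (qd (j+2) * qd j) = 1 := by
  calc qd (j+1) * (qd (j+2) * qd j)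
      = qb j * (qd j * (qd (j+1) * (qd (j+2) * qd j))) := by rw [bdz]
    _ = qb j * ((qd j * (qd (j+1) * qd (j+2))) * qd j) := by simp only [mul_assoc]
    _ = qb j * (1 * qd j) := by rw [h]
    _ = 1 := by rw [one_mul, bd1]

lemma cyc1 (j : ZMod 3) : qd j * (qd (j+1) * qd (j+2)) = 1 := by
  have base : qd 0 * (qd (0+1) * qd (0+2)) = 1 := by
    have : ((0:ZMod 3)+1) = 1 ∧ ((0:ZMod 3)+2) = 2 := by decide
    rw [this.1, this.2]
    simpa only [map_mul, map_one, mul_assoc] using relM SKRel.r3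
  have step : ∀ jj : ZMod 3, qd jj * (qd (jj+1) * qd (jj+2)) = 1 →
      qd (jj+1) * (qd (jj+1+1) * qd (jj+1+2)) = 1 := by
    intro jj h
    have := rot jj h
    rw [za, z5]
    exact this
  have h0 := base
  have h1 := step 0 h0
  have h2 := step (0+1) h1
  rcases zcases j with hj | hj | hj <;> subst hj
  · exact h0
  · have : ((0:ZMod 3)+1) = 1 := by decide
    rw [this] at h1; exact h1
  · have : ((0:ZMod 3)+1+1) = 2 := by decide
    rw [this] at h2; exact h2

lemma cyc1m (i : ZMod 3) : qd (i-1) * (qd i * qd (i+1)) = 1 := by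
  have h := cyc1 (i-1); rwa [z3, z6] at h

lemma cyc1m_z (i : ZMod 3) (z : M) : qd (i-1) * (qd i * (qd (i+1) * z)) = z := by
  have h : (qd (i-1) * (qd i * qd (i+1))) * z = 1 * z := by rw [cyc1m]
  simpa only [mul_assoc, one_mul] using h

lemma C2 (i : ZMod 3) : qd (i+1) * qd (i-1) = qb i := by
  have h := cyc1 (i+1)
  rw [z1, z5] at h
  calc qd (i+1) * qd (i-1) = qd (i+1) * (qd (i-1) * (qd i * qb i)) := by
        rw [db1, mul_one]
    _ = (qd (i+1) * (qd (i-1) * qd i)) * qb i := by simp only [mul_assoc]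
    _ = qb i := by
        rw [show qd (i+1) * (qd (i-1) * qd i) = 1 from h, one_mul]

lemma c2z (i : ZMod 3) (z : M) : qd (i+1) * (qd (i-1) * z) = qb i * z := by
  rw [← mul_assoc, C2]

lemma bEq (i : ZMod 3) : qb i = qd (i+1) * qd (i-1) := (C2 i).symm

lemma bbm (i : ZMod 3) : qb i * qb (i-1) = qd (i+1) := by
  rw [bEq i, mul_assoc, db1, mul_one]

end SK5

namespace SK5

/- relation instances in M -/
lemma m1a (j : ZMod 3) : qa j = qa (j+1) * qd (j-1) := by
  simpa only [map_mul] using relM (SKRel.r1a j)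

lemma m1c (j : ZMod 3) : qc j = qb (j-1) * qc (j+1) := by
  simpa only [map_mul] using relM (SKRel.r1c j)

lemma m2 (j : ZMod 3) : qx j = qd (j+1) * (qx (j-1) * qb (j+1)) := by
  simpa only [map_mul, mul_assoc] using relM (SKRel.r2 j)

lemma comm_dp {g : M} (i : ZMod 3) (h : g * qb (i+1) = qb (i+1) * g) (z : M) :
    qd (i+1) * (g * z) = g * (qd (i+1) * z) := by
  calc qd (i+1) * (g * z)
      = qd (i+1) * (g * (qb (i+1) * (qd (i+1) * z))) := by rw [bdz]
    _ = qd (i+1) * ((g * qb (i+1)) * (qd (i+1) * z)) := by rw [mul_assoc]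
    _ = qd (i+1) * (qb (i+1) * (g * (qd (i+1) * z))) := by rw [h, mul_assoc]
    _ = g * (qd (i+1) * z) := by rw [dbz]

lemma comm_of_inv {g g' u : M} (hgg' : g * g' = 1) (hg'g : g' * g = 1)
    (h : g * u = u * g) : g' * u = u * g' := by
  calc g' * u = g' * (u * (g * g')) := by rw [hgg', mul_one]
    _ = g' * ((u * g) * g') := by rw [mul_assoc]
    _ = g' * ((g * u) * g') := by rw [h]
    _ = (g' * g) * (u * g') := by simp only [mul_assoc]
    _ = u * g' := by rw [hg'g, one_mul]

lemma CMab_z (i : ZMod 3) (z : M) :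
    qd (i+1) * (qa i * (qb i * z)) = qa i * (qb i * (qd (i+1) * z)) := by
  have h : (qa i * qb i) * qb (i+1) = qb (i+1) * (qa i * qb i) := by
    simpa only [map_mul, mul_assoc] using relM (SKRel.r8 i (b (i+1)) (by simp))
  simpa only [mul_assoc] using comm_dp i h z

lemma CMdxb_z (i : ZMod 3) (z : M) :
    qd (i+1) * (qd i * (qx i * (qb i * z))) = qd i * (qx i * (qb i * (qd (i+1) * z))) := by
  have h : (qd i * (qx i * qb i)) * qb (i+1) = qb (i+1) * (qd i * (qx i * qb i)) := by
    simpa only [map_mul, mul_assoc] using relM (SKRel.r10 i (b (i+1)) (by simp))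
  simpa only [mul_assoc] using comm_dp i h z

lemma tp_comm (i : ZMod 3) :
    (qb (i-1) * (qd i * (qd (i-1) * qb i))) * qb (i+1)
      = qb (i+1) * (qb (i-1) * (qd i * (qd (i-1) * qb i))) := by
  have h := relM (SKRel.r9 (i+1) (b (i+1)) (by simp))
  simp only [t, map_mul, mul_assoc, z1, z2] at h
  simpa only [mul_assoc] using h

lemma CMtp_z (i : ZMod 3) (z : M) :
    qd (i+1) * (qb (i-1) * (qd i * (qd (i-1) * (qb i * z))))
      = qb (i-1) * (qd i * (qd (i-1) * (qb i * (qd (i+1) * z)))) := by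
  simpa only [mul_assoc] using comm_dp i (tp_comm i) z

lemma CMtp'_z (i : ZMod 3) (z : M) :
    qd (i+1) * (qd i * (qb (i-1) * (qb i * (qd (i-1) * z))))
      = qd i * (qb (i-1) * (qb i * (qd (i-1) * (qd (i+1) * z)))) := by
  have hgg' : (qb (i-1) * (qd i * (qd (i-1) * qb i)))
      * (qd i * (qb (i-1) * (qb i * qd (i-1)))) = 1 := by
    simp only [mul_assoc]
    rw [bdz, dbz, dbz, bd1]
  have hg'g : (qd i * (qb (i-1) * (qb i * qd (i-1))))
      * (qb (i-1) * (qd i * (qd (i-1) * qb i))) = 1 := by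
    simp only [mul_assoc]
    rw [dbz, bdz, bdz, db1]
  have h := comm_of_inv hgg' hg'g (tp_comm i)
  simpa only [mul_assoc] using comm_dp i h z

/- the crossing identities -/
lemma PhiD_z (i : ZMod 3) (z : M) :
    qd (i+1) * (qd i * z)
      = qb i * (qb (i-1) * (qd i * (qd (i-1) * (qd i * (qd (i+1) * z))))) := by
  rw [bEq i]
  simp only [mul_assoc]
  rw [dbz, cyc1m_z]

lemma PhiB_z (i : ZMod 3) (z : M) :
    qd (i+1) * (qb i * z)
      = qb i * (qb (i-1) * (qb i * (qd (i-1) * (qd i * (qd (i+1) * z))))) := by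
  calc qd (i+1) * (qb i * z)
      = (qb i * qb (i-1)) * (qb i * (qd (i-1) * (qd i * (qd (i+1) * z)))) := by
        rw [bbm, cyc1m_z]
    _ = qb i * (qb (i-1) * (qb i * (qd (i-1) * (qd i * (qd (i+1) * z))))) := by
        simp only [mul_assoc]

lemma PhiA_z (i : ZMod 3) (z : M) :
    qd (i+1) * (qa i * z)
      = qa i * (qb i * (qb i * (qb (i-1) * (qd i * (qd (i-1) * (qd i * (qd (i+1) * z))))))) := by
  calc qd (i+1) * (qa i * z)
      = qd (i+1) * (qa i * (qb i * (qd i * z))) := by rw [bdz]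
    _ = qa i * (qb i * (qd (i+1) * (qd i * z))) := CMab_z i (qd i * z)
    _ = qa i * (qb i * (qb i * (qb (i-1) * (qd i * (qd (i-1) * (qd i * (qd (i+1) * z))))))) := by
        rw [PhiD_z]

lemma PhiX_z (i : ZMod 3) (z : M) :
    qd (i+1) * (qx i * z)
      = qb i * (qb (i-1) * (qb i * (qd (i-1) * (qd i * (qd i * (qx i * (qb i * (qb i *
          (qb (i-1) * (qd i * (qd (i-1) * (qd i * (qd (i+1) * z))))))))))))) := by
  calc qd (i+1) * (qx i * z)
      = qd (i+1) * (qb i * (qd i * (qx i * (qb i * (qd i * z))))) := by rw [bdz, bdz]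
    _ = qb i * (qb (i-1) * (qb i * (qd (i-1) * (qd i * (qd (i+1) *
          (qd i * (qx i * (qb i * (qd i * z))))))))) := by rw [PhiB_z]
    _ = qb i * (qb (i-1) * (qb i * (qd (i-1) * (qd i * (qd i * (qx i * (qb i *
          (qd (i+1) * (qd i * z))))))))) := by rw [CMdxb_z]
    _ = qb i * (qb (i-1) * (qb i * (qd (i-1) * (qd i * (qd i * (qx i * (qb i * (qb i *
          (qb (i-1) * (qd i * (qd (i-1) * (qd i * (qd (i+1) * z))))))))))))) := by
        rw [PhiD_z]

lemma star_z (i : ZMod 3) (z : M) :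
    qd i * (qc i * (qb i * (qd (i+1) * (qd i * z))))
      = qb i * (qd (i+1) * (qd i * (qd i * (qc i * z)))) := by
  have h : qd i * (qc i * (qb i * (qd (i+1) * qd i)))
      = qb i * (qd (i+1) * (qd i * (qd i * qc i))) := by
    simpa only [map_mul, mul_assoc] using
      relM (SKRel.r7 i (b i * d (i+1) * d i) (by simp))
  have := congrArg (· * z) h
  simpa only [mul_assoc] using this

lemma r7z (i : ZMod 3) (z : M) :
    qd (i+1) * (qd i * (qd i * (qc i * z)))
      = qd i * (qd i * (qc i * (qb i * (qd (i+1) * (qd i * z))))) := by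
  calc qd (i+1) * (qd i * (qd i * (qc i * z)))
      = qd i * (qb i * (qd (i+1) * (qd i * (qd i * (qc i * z))))) := by rw [dbz]
    _ = qd i * (qd i * (qc i * (qb i * (qd (i+1) * (qd i * z))))) := by rw [← star_z]

lemma PhiC_z (i : ZMod 3) (z : M) :
    qd (i+1) * (qc i * z)
      = qb i * (qb (i-1) * (qb i * (qd (i-1) * (qd i * (qb i * (qb (i-1) * (qb i *
          (qd (i-1) * (qd i * (qd i * (qd i * (qc i * (qb i * (qb i * (qb (i-1) *
          (qd i * (qd (i-1) * (qd i * (qd (i+1) * z))))))))))))))))))) := by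
  calc qd (i+1) * (qc i * z)
      = qd (i+1) * (qb i * (qb i * (qd i * (qd i * (qc i * z))))) := by rw [bdz, bdz]
    _ = qb i * (qb (i-1) * (qb i * (qd (i-1) * (qd i * (qd (i+1) * (qb i * (qd i *
          (qd i * (qc i * z))))))))) := by rw [PhiB_z]
    _ = qb i * (qb (i-1) * (qb i * (qd (i-1) * (qd i * (qb i * (qb (i-1) * (qb i *
          (qd (i-1) * (qd i * (qd (i+1) * (qd i * (qd i * (qc i * z))))))))))))) := by
        rw [PhiB_z]
    _ = qb i * (qb (i-1) * (qb i * (qd (i-1) * (qd i * (qb i * (qb (i-1) * (qb i *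
          (qd (i-1) * (qd i * (qd i * (qd i * (qc i * (qb i * (qd (i+1) *
          (qd i * z))))))))))))))) := by rw [r7z]
    _ = qb i * (qb (i-1) * (qb i * (qd (i-1) * (qd i * (qb i * (qb (i-1) * (qb i *
          (qd (i-1) * (qd i * (qd i * (qd i * (qc i * (qb i * (qb i * (qb (i-1) *
          (qd i * (qd (i-1) * (qd i * (qd (i+1) * z))))))))))))))))))) := by
        rw [PhiD_z]

lemma PhiDel_z (i : ZMod 3) (z : M) :
    qd (i+1) * (qb (i-1) * (qd i * (qd (i-1) * z)))
      = qb (i-1) * (qd i * (qd (i-1) * (qb i * (qb i * (qb (i-1) * (qd i * (qd (i-1) *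
          (qd i * (qd (i+1) * z))))))))) := by
  calc qd (i+1) * (qb (i-1) * (qd i * (qd (i-1) * z)))
      = qd (i+1) * (qb (i-1) * (qd i * (qd (i-1) * (qb i * (qd i * z))))) := by rw [bdz]
    _ = qb (i-1) * (qd i * (qd (i-1) * (qb i * (qd (i+1) * (qd i * z))))) :=
        CMtp_z i (qd i * z)
    _ = qb (i-1) * (qd i * (qd (i-1) * (qb i * (qb i * (qb (i-1) * (qd i * (qd (i-1) *
          (qd i * (qd (i+1) * z))))))))) := by rw [PhiD_z]

lemma PhiBet_z (i : ZMod 3) (z : M) :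
    qd (i+1) * (qb (i-1) * (qb i * (qd (i-1) * z)))
      = qb i * (qb (i-1) * (qb i * (qd (i-1) * (qd i * (qd i * (qb (i-1) * (qb i *
          (qd (i-1) * (qd (i+1) * z))))))))) := by
  calc qd (i+1) * (qb (i-1) * (qb i * (qd (i-1) * z)))
      = qd (i+1) * (qb i * (qd i * (qb (i-1) * (qb i * (qd (i-1) * z))))) := by rw [bdz]
    _ = qb i * (qb (i-1) * (qb i * (qd (i-1) * (qd i * (qd (i+1) * (qd i * (qb (i-1) *
          (qb i * (qd (i-1) * z))))))))) := by rw [PhiB_z]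
    _ = qb i * (qb (i-1) * (qb i * (qd (i-1) * (qd i * (qd i * (qb (i-1) * (qb i *
          (qd (i-1) * (qd (i+1) * z))))))))) := by rw [CMtp'_z]

end SK5

namespace SK5

/- letter decompositions -/
lemma dAm (i : ZMod 3) : qa (i-1) = qa i * qd (i+1) := by
  have h := m1a (i-1); rwa [z3, z4] at h

lemma dAp (i : ZMod 3) : qa (i+1) = qa i * (qd (i+1) * qd i) := by
  have h := m1a (i+1); rw [z1, z2] at h
  rw [h, dAm, mul_assoc]

lemma dBp (i : ZMod 3) : qb (i+1) = qd (i-1) * qd i := by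
  have h := C2 (i+1); rw [z1, z2] at h; exact h.symm

lemma dBm (i : ZMod 3) : qb (i-1) = qd i * qd (i+1) := by
  have h := C2 (i-1); rw [z3, z4] at h; exact h.symm

lemma dCp (i : ZMod 3) : qc (i+1) = qd (i-1) * qc i := by
  have h := m1c i
  rw [h, ← mul_assoc, db1, one_mul]

lemma dCm (i : ZMod 3) : qc (i-1) = qd (i-1) * (qd i * qc i) := by
  have h := m1c (i-1); rw [z4, z3] at h
  rw [h, dBp, mul_assoc]

lemma dXp (i : ZMod 3) : qx (i+1) = qd (i-1) * (qx i * (qd i * qd (i+1))) := by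
  have h := m2 (i+1); rw [z1, z2] at h
  rw [h, dBm]

lemma dXm (i : ZMod 3) : qx (i-1) = qd i * (qd (i-1) * (qx i * (qd i * (qd (i+1) * qb i)))) := by
  have h := m2 (i-1); rw [z3, z4] at h
  rw [h, dXp]
  simp only [mul_assoc]

/- the symbol alphabet -/
inductive Sym : Type
  | ta | tb | tc | td | tx | sb | sd | op | cl
  deriving DecidableEq

instance : Fintype Sym :=
  Fintype.ofList [.ta, .tb, .tc, .td, .tx, .sb, .sd, .op, .cl] (fun s => by cases s <;> simp)

open Sym

def val (i : ZMod 3) : Sym → Word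
  | .ta => a i
  | .tb => b i
  | .tc => c i
  | .td => d i
  | .tx => x i
  | .sb => b (i-1) * b i * d (i-1)
  | .sd => b (i-1) * d i * d (i-1)
  | .op => d (i+1)
  | .cl => d (i-1)

def scode : Sym → List ℤ
  | .op => [1]
  | .cl => [-1]
  | _ => []

def wt : Sym → ℤ
  | .op => 1
  | .cl => -1
  | _ => 0

def g (L : List Sym) : ℤ := (L.map wt).sum

def Phi : Sym → List Sym
  | .ta => [.ta, .tb, .tb, .sd, .td]
  | .tb => [.tb, .sb, .td]
  | .tc => [.tb, .sb, .td, .tb, .sb, .td, .td, .td, .tc, .tb, .tb, .sd, .td]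
  | .td => [.tb, .sd, .td]
  | .tx => [.tb, .sb, .td, .td, .tx, .tb, .tb, .sd, .td]
  | .sd => [.sd, .tb, .tb, .sd, .td]
  | .sb => [.tb, .sb, .td, .td, .sb]
  | .op => []
  | .cl => []

def PhiL : List Sym → List Sym
  | [] => []
  | s :: L => Phi s ++ PhiL L

def qv (i : ZMod 3) : Sym → M
  | .ta => qa i
  | .tb => qb i
  | .tc => qc i
  | .td => qd i
  | .tx => qx i
  | .sb => qb (i-1) * (qb i * qd (i-1))
  | .sd => qb (i-1) * (qd i * qd (i-1))
  | .op => qd (i+1)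
  | .cl => qd (i-1)

lemma qv_spec (i : ZMod 3) (s : Sym) : qv i s = q (val i s) := by
  cases s <;> simp [qv, val, map_mul, mul_assoc]

lemma qprod_spec (i : ZMod 3) (L : List Sym) :
    (L.map (qv i)).prod = q ((L.map (val i)).prod) := by
  induction L with
  | nil => simp
  | cons s L ih => simp [map_mul, ih, qv_spec]

lemma cross_sym_z (i : ZMod 3) (s : Sym) (hs : s ≠ .op ∧ s ≠ .cl) (z : M) :
    qd (i+1) * (qv i s * z) = ((Phi s).map (qv i)).prod * (qd (i+1) * z) := by
  cases s with
  | ta => simpa only [Phi, List.map, List.prod_cons, List.prod_nil, mul_one, qv,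
      mul_assoc] using PhiA_z i z
  | tb => simpa only [Phi, List.map, List.prod_cons, List.prod_nil, mul_one, qv,
      mul_assoc] using PhiB_z i z
  | tc => simpa only [Phi, List.map, List.prod_cons, List.prod_nil, mul_one, qv,
      mul_assoc] using PhiC_z i z
  | td => simpa only [Phi, List.map, List.prod_cons, List.prod_nil, mul_one, qv,
      mul_assoc] using PhiD_z i z
  | tx => simpa only [Phi, List.map, List.prod_cons, List.prod_nil, mul_one, qv,
      mul_assoc] using PhiX_z i z
  | sd => simpa only [Phi, List.map, List.prod_cons, List.prod_nil, mul_one, qv,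
      mul_assoc] using PhiDel_z i z
  | sb => simpa only [Phi, List.map, List.prod_cons, List.prod_nil, mul_one, qv,
      mul_assoc] using PhiBet_z i z
  | op => exact absurd rfl hs.1
  | cl => exact absurd rfl hs.2

lemma cross_list_z (i : ZMod 3) :
    ∀ (T : List Sym), (∀ s ∈ T, s ≠ Sym.op ∧ s ≠ Sym.cl) → ∀ z : M,
    qd (i+1) * ((T.map (qv i)).prod * z)
      = ((PhiL T).map (qv i)).prod * (qd (i+1) * z) := by
  intro T
  induction T with
  | nil => intro _ z; simp [PhiL]
  | cons s T ih =>
    intro h z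
    have hs := h s List.mem_cons_self
    have hT := fun u hu => h u (List.mem_cons_of_mem _ hu)
    calc qd (i+1) * (((s :: T).map (qv i)).prod * z)
        = qd (i+1) * (qv i s * ((T.map (qv i)).prod * z)) := by
          simp [mul_assoc]
      _ = ((Phi s).map (qv i)).prod * (qd (i+1) * ((T.map (qv i)).prod * z)) :=
          cross_sym_z i s hs _
      _ = ((Phi s).map (qv i)).prod * (((PhiL T).map (qv i)).prod * (qd (i+1) * z)) := by
          rw [ih hT]
      _ = ((PhiL (s :: T)).map (qv i)).prod * (qd (i+1) * z) := by
          show _ = (((Phi s ++ PhiL T)).map (qv i)).prod * _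
          simp [List.map_append, List.prod_append, mul_assoc]

lemma Phi_triv : ∀ s u : Sym, u ∈ Phi s → u ≠ Sym.op ∧ u ≠ Sym.cl := by decide

lemma PhiL_triv : ∀ (T : List Sym) (u : Sym), u ∈ PhiL T → u ≠ Sym.op ∧ u ≠ Sym.cl := by
  intro T
  induction T with
  | nil => intro u hu; simp [PhiL] at hu
  | cons s T ih =>
    intro u hu
    rcases List.mem_append.mp hu with h | h
    · exact Phi_triv s u h
    · exact ih u h

/- weight bookkeeping -/
lemma g_nil : g [] = 0 := rfl

lemma g_cons (s : Sym) (L : List Sym) : g (s :: L) = wt s + g L := by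
  simp [g]

lemma g_append (A B : List Sym) : g (A ++ B) = g A + g B := by
  simp [g]

lemma g_count (L : List Sym) : g L = (L.count Sym.op : ℤ) - (L.count Sym.cl : ℤ) := by
  induction L with
  | nil => rfl
  | cons s L ih =>
    rw [g_cons, ih]
    cases s <;> simp [wt, List.count_cons] <;> push_cast <;> ring_nf

lemma g_triv (L : List Sym) (h : ∀ s ∈ L, s ≠ Sym.op ∧ s ≠ Sym.cl) : g L = 0 := by
  induction L with
  | nil => rfl
  | cons s L ih =>
    have hs := h s List.mem_cons_self
    have hwt : wt s = 0 := by
      cases s <;> first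
        | rfl
        | exact absurd rfl hs.1
        | exact absurd rfl hs.2
    rw [g_cons, hwt, zero_add]
    exact ih (fun u hu => h u (List.mem_cons_of_mem _ hu))

lemma split_first (e : Sym) : ∀ L : List Sym, e ∈ L → ∃ P Q, L = P ++ e :: Q ∧ e ∉ P := by
  intro L
  induction L with
  | nil => intro h; simp at h
  | cons s L ih =>
    intro h
    by_cases hs : s = e
    · exact ⟨[], L, by rw [hs]; rfl, by simp⟩
    · have he : e ∈ L := by
        rcases List.mem_cons.mp h with h1 | h1
        · exact absurd h1.symm hs
        · exact h1
      obtain ⟨P, Q, h1, h2⟩ := ih he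
      refine ⟨s :: P, Q, by rw [h1]; rfl, ?_⟩
      intro hmem
      rcases List.mem_cons.mp hmem with h3 | h3
      · exact hs h3.symm
      · exact h2 h3

lemma split_last (e : Sym) : ∀ L : List Sym, e ∈ L → ∃ P Q, L = P ++ e :: Q ∧ e ∉ Q := by
  intro L
  induction L with
  | nil => intro h; simp at h
  | cons s L ih =>
    intro h
    by_cases he : e ∈ L
    · obtain ⟨P, Q, h1, h2⟩ := ih he
      exact ⟨s :: P, Q, by rw [h1]; rfl, h2⟩
    · have hs : s = e := by
        rcases List.mem_cons.mp h with h1 | h1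
        · exact h1.symm
        · exact absurd h1 he
      exact ⟨[], L, by rw [hs]; rfl, he⟩

def Bal (L : List Sym) : Prop := (∀ A B, L = A ++ B → 0 ≤ g A) ∧ g L = 0

end SK5

namespace SK5

open Sym

lemma val_mem_Bset (i : ZMod 3) (s : Sym) (hs : s ≠ Sym.op ∧ s ≠ Sym.cl) :
    val i s ∈ Bset i := by
  cases s <;> first
    | exact absurd rfl hs.1
    | exact absurd rfl hs.2
    | simp [Bset, val]

lemma core (i : ZMod 3) :
    ∀ n (L : List Sym), L.count Sym.op = n → Bal L →
    ∃ ws : List Word, (∀ u ∈ ws, u ∈ Bset i) ∧ skCon ((L.map (val i)).prod) ws.prod := by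
  intro n
  induction n with
  | zero =>
    intro L hc hb
    have hnop : Sym.op ∉ L := List.count_eq_zero.mp hc
    have hncl : Sym.cl ∉ L := by
      intro hcl
      have h1 := g_count L
      have h2 := hb.2
      have h3 : 0 < L.count Sym.cl := List.count_pos_iff.mpr hcl
      omega
    refine ⟨L.map (val i), ?_, skCon.refl _⟩
    intro u hu
    obtain ⟨s, hsmem, rfl⟩ := List.mem_map.mp hu
    exact val_mem_Bset i s
      ⟨fun h => hnop (by rw [← h]; exact hsmem), fun h => hncl (by rw [← h]; exact hsmem)⟩
  | succ n ih =>
    intro L hc hb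
    have hclL : Sym.cl ∈ L := by
      have h1 := g_count L
      have h2 := hb.2
      have : 0 < L.count Sym.cl := by omega
      exact List.count_pos_iff.mp this
    obtain ⟨P, L2, hL, hclP⟩ := split_first Sym.cl L hclL
    have hgP : (1:ℤ) ≤ g P := by
      have h0 : 0 ≤ g (P ++ [Sym.cl]) := hb.1 (P ++ [Sym.cl]) L2 (by rw [hL]; simp)
      have h1 : g (P ++ [Sym.cl]) = g P + -1 := by rw [g_append]; rfl
      omega
    have hopP : Sym.op ∈ P := by
      have h1 := g_count P
      have h2 : P.count Sym.cl = 0 := List.count_eq_zero.mpr hclP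
      have : 0 < P.count Sym.op := by omega
      exact List.count_pos_iff.mp this
    obtain ⟨L1, T, hP, hopT⟩ := split_last Sym.op P hopP
    have hTtriv : ∀ s ∈ T, s ≠ Sym.op ∧ s ≠ Sym.cl := by
      intro s hsT
      refine ⟨fun h => hopT (by rw [← h]; exact hsT), fun h => hclP ?_⟩
      rw [hP]
      subst h
      exact List.mem_append_right _ (List.mem_cons_of_mem _ hsT)
    have hgT : g T = 0 := g_triv T hTtriv
    have hgPhi : g (PhiL T) = 0 := g_triv _ (PhiL_triv T)
    have hLdecomp : L = L1 ++ (Sym.op :: (T ++ Sym.cl :: L2)) := by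
      rw [hL, hP]; simp
    set L' : List Sym := L1 ++ (PhiL T ++ Sym.tb :: L2) with hL'def
    have hPhiop : (PhiL T).count Sym.op = 0 :=
      List.count_eq_zero.mpr (fun h => (PhiL_triv T _ h).1 rfl)
    have hTop : T.count Sym.op = 0 := List.count_eq_zero.mpr hopT
    have hcount' : L'.count Sym.op = n := by
      have hcL : L.count Sym.op
          = L1.count Sym.op + (1 + (T.count Sym.op + L2.count Sym.op)) := by
        rw [hLdecomp]
        simp [List.count_append, List.count_cons]
        omega
      have hcL' : L'.count Sym.op
          = L1.count Sym.op + ((PhiL T).count Sym.op + L2.count Sym.op) := by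
        rw [hL'def]
        simp [List.count_append, List.count_cons]
      omega
    have hbal' : Bal L' := by
      constructor
      · intro A B hAB
        rw [hL'def] at hAB
        rcases List.append_eq_append_iff.mp hAB with ⟨a', hA1, hb1⟩ | ⟨c', hc1, hd1⟩
        · rcases List.append_eq_append_iff.mp hb1 with ⟨w, hw1, hw2⟩ | ⟨w, hw1, hw2⟩
          · cases w with
            | nil =>
              have hgA : g A = g L1 + g (PhiL T) := by
                rw [hA1, hw1, g_append, g_append]
                simp [g_nil]
              have h0 := hb.1 L1 _ hLdecomp
              omega
            | cons s w' =>
              rw [List.cons_append] at hw2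
              injection hw2 with hs1 hs2
              have hLpre : L = (L1 ++ (Sym.op :: (T ++ Sym.cl :: w'))) ++ B := by
                rw [hLdecomp, hs2]
                simp
              have h0 := hb.1 _ B hLpre
              have e1 : g (L1 ++ (Sym.op :: (T ++ Sym.cl :: w')))
                  = g L1 + (1 + (g T + (-1 + g w'))) := by
                simp [g_append, g_cons, wt]
              have e2 : g A = g L1 + (g (PhiL T) + (wt s + g w')) := by
                rw [hA1, hw1, g_append, g_append, g_cons]
              have e3 : wt s = 0 := by rw [← hs1]; rfl
              omega
          · have ha'g : g a' = 0 :=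
              g_triv a' (fun s hs => PhiL_triv T s (by rw [hw1]; exact List.mem_append_left _ hs))
            have hgA : g A = g L1 + g a' := by rw [hA1, g_append]
            have h0 := hb.1 L1 _ hLdecomp
            omega
        · exact hb.1 A (c' ++ (Sym.op :: (T ++ Sym.cl :: L2)))
            (by rw [hLdecomp, hc1]; simp)
      · have h2 := hb.2
        have hgL : g L = g L1 + (1 + (g T + (-1 + g L2))) := by
          rw [hLdecomp]; simp [g_append, g_cons, wt]
        have hgL' : g L' = g L1 + (g (PhiL T) + (0 + g L2)) := by
          rw [hL'def]; simp [g_append, g_cons, wt]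
        omega
    have hstep : q ((L.map (val i)).prod) = q ((L'.map (val i)).prod) := by
      rw [← qprod_spec, ← qprod_spec, hLdecomp, hL'def]
      simp only [List.map_append, List.prod_append, List.map_cons, List.prod_cons,
        mul_assoc, qv]
      rw [cross_list_z i T hTtriv, c2z]
    obtain ⟨ws, hws, hsk⟩ := ih L' hcount' hbal'
    exact ⟨ws, hws, skCon.trans (sk_of_q hstep) hsk⟩

end SK5

namespace SK5

lemma indexCases (i j : ZMod 3) : j = i ∨ j = i + 1 ∨ j = i - 1 := by
  rcases zcases (j - i) with h | h | h
  · left; exact sub_eq_zero.mp h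
  · right; left
    have h2 := sub_eq_iff_eq_add.mp h
    rw [h2, add_comm]
  · right; right
    have h2 := sub_eq_iff_eq_add.mp h
    rw [h2, add_comm, z7]

lemma sym_decomp (i : ZMod 3) (ℓ : Letter) :
    ∃ L : List Sym, q (FreeMonoid.of ℓ) = (L.map (qv i)).prod ∧
      code i ℓ = (L.map scode).flatten := by
  cases ℓ with
  | a j =>
    rcases indexCases i j with rfl | rfl | rfl
    · exact ⟨[.ta], by simp only [List.map_cons, List.map_nil, List.prod_cons, List.prod_nil, mul_one]; rfl, by simp [code, scode]⟩
    · exact ⟨[.ta, .op, .td], by simp only [List.map_cons, List.map_nil, List.prod_cons, List.prod_nil, mul_one, qv]; exact dAp i, by simp [code, scode, n1 i]⟩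
    · exact ⟨[.ta, .op], by simp only [List.map_cons, List.map_nil, List.prod_cons, List.prod_nil, mul_one, qv]; exact dAm i, by simp [code, scode, n2 i]⟩
  | b j =>
    rcases indexCases i j with rfl | rfl | rfl
    · exact ⟨[.tb], by simp only [List.map_cons, List.map_nil, List.prod_cons, List.prod_nil, mul_one]; rfl, by simp [code, scode]⟩
    · exact ⟨[.cl, .td], by simp only [List.map_cons, List.map_nil, List.prod_cons, List.prod_nil, mul_one, qv]; exact dBp i, by simp [code, scode, n1 i, n3 i]⟩
    · exact ⟨[.td, .op], by simp only [List.map_cons, List.map_nil, List.prod_cons, List.prod_nil, mul_one, qv]; exact dBm i, by simp [code, scode, n2 i]⟩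
  | c j =>
    rcases indexCases i j with rfl | rfl | rfl
    · exact ⟨[.tc], by simp only [List.map_cons, List.map_nil, List.prod_cons, List.prod_nil, mul_one]; rfl, by simp [code, scode]⟩
    · exact ⟨[.cl, .tc], by simp only [List.map_cons, List.map_nil, List.prod_cons, List.prod_nil, mul_one, qv]; exact dCp i, by simp [code, scode, n1 i]⟩
    · exact ⟨[.cl, .td, .tc], by simp only [List.map_cons, List.map_nil, List.prod_cons, List.prod_nil, mul_one, qv]; exact dCm i, by simp [code, scode, n2 i]⟩
  | d j =>
    rcases indexCases i j with rfl | rfl | rfl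
    · exact ⟨[.td], by simp only [List.map_cons, List.map_nil, List.prod_cons, List.prod_nil, mul_one]; rfl, by simp [code, scode]⟩
    · exact ⟨[.op], by simp only [List.map_cons, List.map_nil, List.prod_cons, List.prod_nil, mul_one]; rfl, by simp [code, scode, n1 i]⟩
    · exact ⟨[.cl], by simp only [List.map_cons, List.map_nil, List.prod_cons, List.prod_nil, mul_one]; rfl, by simp [code, scode, n2 i, n4 i]⟩
  | x j =>
    rcases indexCases i j with rfl | rfl | rfl
    · exact ⟨[.tx], by simp only [List.map_cons, List.map_nil, List.prod_cons, List.prod_nil, mul_one]; rfl, by simp [code, scode]⟩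
    · exact ⟨[.cl, .tx, .td, .op], by simp only [List.map_cons, List.map_nil, List.prod_cons, List.prod_nil, mul_one, qv]; exact dXp i,
        by simp [code, scode, n1 i]⟩
    · exact ⟨[.td, .cl, .tx, .td, .op, .tb], by simp only [List.map_cons, List.map_nil, List.prod_cons, List.prod_nil, mul_one, qv]; exact dXm i,
        by simp [code, scode, n2 i]⟩

lemma word_decomp (i : ZMod 3) (w : Word) :
    ∃ L : List Sym, q w = (L.map (qv i)).prod ∧
      brackets i w = (L.map scode).flatten := by
  induction w using FreeMonoid.recOn with
  | one => exact ⟨[], by simp, by simp [brackets]⟩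
  | of_mul ℓ w ihw =>
    obtain ⟨L1, h1, h2⟩ := sym_decomp i ℓ
    obtain ⟨L2, h3, h4⟩ := ihw
    refine ⟨L1 ++ L2, ?_, ?_⟩
    · rw [map_mul, h1, h3, List.map_append, List.prod_append]
    · have hsplit : brackets i (FreeMonoid.of ℓ * w) = code i ℓ ++ brackets i w := by
        simp [brackets, List.map_append, List.flatten_append]
      rw [hsplit, h2, h4, List.map_append, List.flatten_append]

lemma g_flatten (L : List Sym) : ((L.map scode).flatten).sum = g L := by
  induction L with
  | nil => rfl
  | cons s L ih =>
    have hstep : ((s :: L).map scode).flatten = scode s ++ (L.map scode).flatten := by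
      simp
    rw [hstep, List.sum_append, ih, g_cons]
    congr 1
    cases s <;> rfl

lemma bal_of_ibal (i : ZMod 3) (w : Word) (L : List Sym)
    (hcode : brackets i w = (L.map scode).flatten) (hw : IBalanced i w) : Bal L := by
  constructor
  · intro A B hAB
    have hpre : ((A.map scode).flatten) <+: brackets i w := by
      rw [hcode, hAB]
      exact ⟨(B.map scode).flatten, by simp [List.map_append, List.flatten_append]⟩
    have h := hw.1 _ hpre
    rwa [g_flatten] at h
  · have h := hw.2
    rw [hcode, g_flatten] at h
    exact h

lemma ibal_nil {i : ZMod 3} {w : Word} (h : brackets i w = []) : IBalanced i w := by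
  constructor
  · intro p hp
    rw [h] at hp
    obtain ⟨s, hs⟩ := hp
    have hp0 : p = [] := (List.append_eq_nil_iff.mp hs).1
    simp [hp0]
  · rw [h]; rfl

lemma ibal_pair {i : ZMod 3} {w : Word} (h : brackets i w = [1, -1]) : IBalanced i w := by
  constructor
  · intro p hp
    rw [h] at hp
    obtain ⟨s, hs⟩ := hp
    rcases p with _ | ⟨p1, _ | ⟨p2, rest⟩⟩
    · simp
    · have h1 : p1 = 1 ∧ s = [-1] := by simpa using hs
      simp [h1.1]
    · have h2 : p1 = 1 ∧ p2 = -1 ∧ rest ++ s = [] := by simpa using hs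
      have hr : rest = [] := (List.append_eq_nil_iff.mp h2.2.2).1
      simp [h2.1, h2.2.1, hr]
  · rw [h]; simp

lemma br_a (i : ZMod 3) : brackets i (a i) = [] := by simp [brackets, a, code]
lemma br_b (i : ZMod 3) : brackets i (b i) = [] := by simp [brackets, b, code]
lemma br_c (i : ZMod 3) : brackets i (c i) = [] := by simp [brackets, c, code]
lemma br_d (i : ZMod 3) : brackets i (d i) = [] := by simp [brackets, d, code]
lemma br_x (i : ZMod 3) : brackets i (x i) = [] := by simp [brackets, x, code]

lemma br_sb (i : ZMod 3) : brackets i (b (i-1) * b i * d (i-1)) = [1, -1] := by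
  simp [brackets, b, d, code, n2 i, n4 i]

lemma br_sd (i : ZMod 3) : brackets i (b (i-1) * d i * d (i-1)) = [1, -1] := by
  simp [brackets, b, d, code, n2 i, n4 i]

end SK5


/-- Lemma 5: each of the words of B_i is i-balanced, and every i-balanced word is
equivalent to a concatenation of words from B_i. -/
theorem lemma5 : ∀ i : ZMod 3,
    (∀ u ∈ Bset i, IBalanced i u) ∧
    ∀ w : Word, IBalanced i w →
      ∃ ws : List Word, (∀ u ∈ ws, u ∈ Bset i) ∧ skCon w ws.prod := by
  intro i
  constructor
  · intro u hu
    simp only [Bset, Set.mem_insert_iff, Set.mem_singleton_iff] at hu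
    rcases hu with rfl | rfl | rfl | rfl | rfl | rfl | rfl
    · exact SK5.ibal_nil (SK5.br_a i)
    · exact SK5.ibal_nil (SK5.br_b i)
    · exact SK5.ibal_nil (SK5.br_c i)
    · exact SK5.ibal_nil (SK5.br_d i)
    · exact SK5.ibal_nil (SK5.br_x i)
    · exact SK5.ibal_pair (SK5.br_sb i)
    · exact SK5.ibal_pair (SK5.br_sd i)
  · intro w hw
    obtain ⟨L, hq, hcode⟩ := SK5.word_decomp i w
    have hbal := SK5.bal_of_ibal i w L hcode hw
    obtain ⟨ws, hmem, hsk⟩ := SK5.core i (L.count SK5.Sym.op) L rfl hbal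
    refine ⟨ws, hmem, skCon.trans (SK5.sk_of_q ?_) hsk⟩
    rw [hq, SK5.qprod_spec]
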